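/- Let T be a measure-preserving transformation of a probability space (E, ℰ, π) and K a regular conditional distribution of X given T(X). For B ∈ ℰ, define U(B) = ⋃_{k∈ℕ} T^{-k}(B), R(B) = limsup_{k→∞} T^{-k}(B), and A(B) = {x ∈ E : ∃ n, K^n(x,B) > 0}. Then π is invariant for K, U(B) = R(B) π-almost surely, and A(B) ⊆ U(B) π-almost surely. -/

import Mathlib

open MeasureTheory ProbabilityTheory Filter

/-- Iterated (n-step) transition kernel. -/
noncomputable def kpow {E : Type*} [MeasurableSpace E] (K : Kernel E E) : ℕ → Kernel E E
  | 0 => Kernel.id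
  | n + 1 => (kpow K n).comp K

instance kpow_markov {E : Type*} [MeasurableSpace E] (K : Kernel E E) [IsMarkovKernel K] :
    ∀ n, IsMarkovKernel (kpow K n)
  | 0 => by rw [kpow]; infer_instance
  | n + 1 => by rw [kpow]; have := kpow_markov K n; infer_instance

/-- with `U B = ⋃ k, (T^[k])⁻¹ B`, `R B = limsup_k (T^[k])⁻¹ B` and
`A B = {x | ∃ n, K^n(x,B) > 0}`, the measure `π` is invariant for `K`,
`U B = R B` π-a.e. and `A B ⊆ U B` π-a.e. -/
theorem recurrence_and_accessibility
    {E : Type*} [MeasurableSpace E]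
    (π : Measure E) [IsProbabilityMeasure π]
    (T : E → E) (hTm : Measurable T) (hT : MeasurePreserving T π π)
    (K : Kernel E E) [IsMarkovKernel K]
    (hK : π.map (fun x => (T x, x)) = π ⊗ₘ K)
    (B : Set E) (hB : MeasurableSet B) :
    π.bind K = π ∧
    (⋃ k : ℕ, T^[k] ⁻¹' B : Set E) =ᵐ[π] {x : E | ∀ n : ℕ, ∃ k ≥ n, T^[k] x ∈ B} ∧
    (∀ᵐ x ∂π, (∃ n : ℕ, 0 < kpow K n x B) → x ∈ ⋃ k : ℕ, T^[k] ⁻¹' B) := by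
  -- notation
  set C : Set E := ⋃ k : ℕ, T^[k] ⁻¹' B with hCdef
  have hC : MeasurableSet C := MeasurableSet.iUnion fun k => (hTm.iterate k) hB
  -- Part 1 : invariance
  have hbind : π.bind K = π := by
    ext s hs
    rw [Measure.bind_apply hs K.measurable.aemeasurable]
    have h1 : (π ⊗ₘ K) (Set.univ ×ˢ s) = ∫⁻ a, K a s ∂π := by
      rw [Measure.compProd_apply (MeasurableSet.univ.prod hs)]
      simp
    rw [← h1, ← hK,
      Measure.map_apply ((hTm.prodMk measurable_id : Measurable fun x => (T x, x)))
        (MeasurableSet.univ.prod hs)]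
    congr 1
    ext x
    simp
  -- Poincaré recurrence
  have hrec : ∀ᵐ x ∂π, x ∈ B → ∃ᶠ n in atTop, T^[n] x ∈ B :=
    hT.conservative.ae_mem_imp_frequently_image_mem hB.nullMeasurableSet
  -- a.e. every iterate satisfies recurrence statement
  have hrec' : ∀ᵐ x ∂π, ∀ j : ℕ, T^[j] x ∈ B → ∃ᶠ n in atTop, T^[n] (T^[j] x) ∈ B := by
    rw [ae_all_iff]
    intro j
    exact (hT.iterate j).quasiMeasurePreserving.ae hrec
  -- Part 2
  have hpart2 : C =ᵐ[π] {x : E | ∀ n : ℕ, ∃ k ≥ n, T^[k] x ∈ B} := by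
    rw [Filter.eventuallyEq_set]
    filter_upwards [hrec'] with x hx
    constructor
    · intro hxC n
      obtain ⟨j, hj⟩ := Set.mem_iUnion.1 hxC
      obtain ⟨m, hm, hmB⟩ := (frequently_atTop.1 (hx j hj)) n
      exact ⟨m + j, le_trans hm (Nat.le_add_right m j), by
        rwa [Function.iterate_add_apply]⟩
    · intro hxR
      obtain ⟨k, -, hk⟩ := hxR 0
      exact Set.mem_iUnion.2 ⟨k, hk⟩
  -- core of Part 3: one-step
  have hstep : ∀ᵐ y ∂π, y ∉ C → K y C = 0 := by
    have hint : ∫⁻ y in Cᶜ, K y C ∂π = 0 := by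
      have h1 : (π ⊗ₘ K) (Cᶜ ×ˢ C) = ∫⁻ y in Cᶜ, K y C ∂π := by
        rw [Measure.compProd_apply (hC.compl.prod hC),
          ← lintegral_indicator hC.compl (fun y => K y C)]
        congr 1
        ext y
        by_cases hy : y ∈ Cᶜ <;>
          simp [Set.indicator_apply, hy, Set.mk_preimage_prod, hy]
      rw [← h1, ← hK,
        Measure.map_apply ((hTm.prodMk measurable_id : Measurable fun x => (T x, x)))
          (hC.compl.prod hC)]
      -- the set is contained in the null set of non-recurrent points
      have hnull : π {x | ¬(x ∈ B → ∃ᶠ n in atTop, T^[n] x ∈ B)} = 0 := ae_iff.1 hrec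
      refine measure_mono_null ?_ hnull
      intro x hx
      simp only [Set.mem_preimage, Set.mem_prod, Set.mem_compl_iff] at hx
      obtain ⟨hTx, hxC⟩ := hx
      -- T x ∉ C means ∀ k, T^[k+1] x ∉ B
      have hfut : ∀ k, T^[k + 1] x ∉ B := by
        intro k hk
        exact hTx (Set.mem_iUnion.2 ⟨k, by
          rwa [Set.mem_preimage, ← Function.iterate_succ_apply]⟩)
      obtain ⟨j, hj⟩ := Set.mem_iUnion.1 hxC
      have hxB : x ∈ B := by
        cases j with
        | zero => simpa using hj
        | succ k => exact absurd hj (hfut k)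
      intro hcontra
      obtain ⟨m, hm, hmB⟩ := (frequently_atTop.1 (hcontra hxB)) 1
      obtain ⟨k, rfl⟩ := Nat.exists_eq_add_of_le hm
      exact hfut k (by rwa [Nat.add_comm] at hmB)
    exact (setLIntegral_eq_zero_iff hC.compl (K.measurable_coe hC)).1 hint
  -- induction: a.e. y ∉ C → kpow K n y C = 0
  have hmain : ∀ n : ℕ, ∀ᵐ y ∂π, y ∉ C → kpow K n y C = 0 := by
    intro n
    induction n with
    | zero =>
      refine Eventually.of_forall fun y hy => ?_
      simp [kpow, Kernel.id_apply, hC, hy]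
    | succ n ih =>
      have hmeas : Measurable fun y => kpow K n y C := (kpow K n).measurable_coe hC
      have hIHint : ∫⁻ y in Cᶜ, kpow K n y C ∂π = 0 := by
        refine (setLIntegral_eq_zero_iff hC.compl hmeas).2 ?_
        filter_upwards [ih] with y hy h
        exact hy h
      have hKint : ∫⁻ y in Cᶜ, K y C ∂π = 0 := by
        refine (setLIntegral_eq_zero_iff hC.compl (K.measurable_coe hC)).2 ?_
        filter_upwards [hstep] with y hy h
        exact hy h
      have hint : ∫⁻ y in Cᶜ, kpow K (n + 1) y C ∂π = 0 := by
        have hb : ∀ y, kpow K (n + 1) y C ≤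
            K y C + ∫⁻ z, Cᶜ.indicator (fun z => kpow K n z C) z ∂(K y) := by
          intro y
          have : kpow K (n + 1) y C = ∫⁻ z, kpow K n z C ∂(K y) := by
            rw [show kpow K (n + 1) = (kpow K n).comp K from rfl]
            exact Kernel.comp_apply' _ _ _ hC
          rw [this]
          have hle : ∀ z, kpow K n z C ≤
              C.indicator 1 z + Cᶜ.indicator (fun z => kpow K n z C) z := by
            intro z
            by_cases hz : z ∈ C
            · rw [Set.indicator_of_mem hz, Set.indicator_of_notMem (by simpa using hz),
                add_zero, Pi.one_apply]
              exact prob_le_one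
            · rw [Set.indicator_of_notMem hz, Set.indicator_of_mem (by simpa using hz),
                zero_add]
          calc ∫⁻ z, kpow K n z C ∂(K y)
              ≤ ∫⁻ z, (C.indicator 1 z + Cᶜ.indicator (fun z => kpow K n z C) z) ∂(K y) :=
                lintegral_mono hle
            _ = K y C + ∫⁻ z, Cᶜ.indicator (fun z => kpow K n z C) z ∂(K y) := by
                rw [lintegral_add_left (measurable_one.indicator hC),
                  lintegral_indicator_one hC]
        have h2 : ∫⁻ y in Cᶜ, kpow K (n + 1) y C ∂π ≤
            (∫⁻ y in Cᶜ, K y C ∂π) +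
              ∫⁻ y, (∫⁻ z, Cᶜ.indicator (fun z => kpow K n z C) z ∂(K y)) ∂π := by
          calc ∫⁻ y in Cᶜ, kpow K (n + 1) y C ∂π
              ≤ ∫⁻ y in Cᶜ, (K y C + ∫⁻ z, Cᶜ.indicator (fun z => kpow K n z C) z ∂(K y)) ∂π :=
                lintegral_mono fun y => hb y
            _ ≤ (∫⁻ y in Cᶜ, K y C ∂π) +
                ∫⁻ y in Cᶜ, (∫⁻ z, Cᶜ.indicator (fun z => kpow K n z C) z ∂(K y)) ∂π := by
                rw [lintegral_add_left (K.measurable_coe hC)]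
            _ ≤ _ := by
                gcongr
                exact Measure.restrict_le_self
        have h3 : ∫⁻ y, (∫⁻ z, Cᶜ.indicator (fun z => kpow K n z C) z ∂(K y)) ∂π = 0 := by
          rw [← Measure.lintegral_bind K.measurable.aemeasurable (hmeas.indicator hC.compl).aemeasurable, hbind,
            lintegral_indicator hC.compl]
          exact hIHint
        refine le_antisymm ?_ zero_le
        calc ∫⁻ y in Cᶜ, kpow K (n + 1) y C ∂π ≤ _ := h2
          _ = 0 := by rw [hKint, h3, add_zero]
      exact (setLIntegral_eq_zero_iff hC.compl ((kpow K (n + 1)).measurable_coe hC)).1 hint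
  refine ⟨hbind, hpart2, ?_⟩
  rw [← ae_all_iff] at hmain
  filter_upwards [hmain] with x hx hacc
  by_contra hxC
  obtain ⟨n, hn⟩ := hacc
  have hBC : B ⊆ C := fun z hz => Set.mem_iUnion.2 ⟨0, by simpa using hz⟩
  have hle : kpow K n x B ≤ kpow K n x C := measure_mono hBC
  rw [hx n hxC] at hle
  exact absurd (lt_of_lt_of_le hn hle) (lt_irrefl 0)
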